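/- Let α > 2, β > 0, d > 0, and let H, H̃ be independent exponential random variables with rate 1. Then ∫_{ℝ²} P[H d^{-α} < β H̃ |X|^{-α}] dX = β^{2/α} · π Γ(1+2/α) Γ(1-2/α) · d², where the integral is with respect to Lebesgue measure on the plane. -/

import Mathlib

open scoped ENNReal

open MeasureTheory ProbabilityTheory Real Set

lemma exp_tail (t : ℝ) (ht : 0 ≤ t) : expMeasure 1 (Ioi t) = ENNReal.ofReal (rexp (-t)) := by
  have hprob : IsProbabilityMeasure (expMeasure 1) := isProbabilityMeasure_expMeasure one_pos
  have hIic : expMeasure 1 (Iic t) = ENNReal.ofReal (1 - rexp (-t)) := by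
    rw [expMeasure, gammaMeasure, withDensity_apply _ measurableSet_Iic]
    have h0 : (gammaPDF 1 1 : ℝ → ℝ≥0∞) = exponentialPDF 1 := rfl
    rw [h0, lintegral_exponentialPDF_eq_antiDeriv (r := 1) one_pos t, if_pos ht, one_mul]
  have h1 : expMeasure 1 (Ioi t) = expMeasure 1 univ - expMeasure 1 (Iic t) := by
    rw [← measure_compl measurableSet_Iic (measure_ne_top _ _), compl_Iic]
  have he : rexp (-t) ≤ 1 := exp_le_one_iff.mpr (by linarith)
  rw [h1, hIic, measure_univ, ← ENNReal.ofReal_one, ← ENNReal.ofReal_sub _ (by linarith)]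
  norm_num

lemma prob_lt {Ω : Type*} [MeasurableSpace Ω] (μ : Measure Ω) [IsProbabilityMeasure μ]
    (H H' : Ω → ℝ) (hH : Measurable H) (hH' : Measurable H')
    (hlawH : Measure.map H μ = expMeasure 1) (hlawH' : Measure.map H' μ = expMeasure 1)
    (hindep : IndepFun H H' μ) {c : ℝ} (hc : 0 < c) :
    μ {ω | H ω < c * H' ω} = ENNReal.ofReal (c / (1 + c)) := by
  have hprob : IsProbabilityMeasure (expMeasure 1) := isProbabilityMeasure_expMeasure one_pos
  have hmap : μ.map (fun ω => (H ω, H' ω)) = (expMeasure 1).prod (expMeasure 1) := by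
    rw [(indepFun_iff_map_prod_eq_prod_map_map hH.aemeasurable hH'.aemeasurable).mp hindep,
      hlawH, hlawH']
  have hS : MeasurableSet {p : ℝ × ℝ | p.1 < c * p.2} :=
    measurableSet_lt measurable_fst (measurable_const.mul measurable_snd)
  have h1 : μ {ω | H ω < c * H' ω}
      = (expMeasure 1).prod (expMeasure 1) {p : ℝ × ℝ | p.1 < c * p.2} := by
    rw [← hmap, Measure.map_apply (hH.prodMk hH') hS]; rfl
  rw [h1, Measure.prod_apply hS]
  have h2 : ∀ x : ℝ, (Prod.mk x ⁻¹' {p : ℝ × ℝ | p.1 < c * p.2}) = Ioi (x / c) := by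
    intro x; ext y
    simp only [mem_preimage, mem_setOf_eq, mem_Ioi, div_lt_iff₀ hc, mul_comm]
  simp_rw [h2]
  have hmeas : Measurable fun x : ℝ => expMeasure 1 (Ioi (x / c)) := by
    have : Antitone fun t : ℝ => expMeasure 1 (Ioi t) :=
      fun a b hab => measure_mono (Ioi_subset_Ioi hab)
    exact (this.measurable).comp (measurable_id.div_const c)
  have hwd : (expMeasure 1 : Measure ℝ) = volume.withDensity (exponentialPDF 1) := rfl
  have key : ∫⁻ x, expMeasure 1 (Ioi (x / c)) ∂(expMeasure 1)
      = ∫⁻ x, exponentialPDF 1 x * expMeasure 1 (Ioi (x / c)) := by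
    conv_lhs => rw [hwd]
    exact lintegral_withDensity_eq_lintegral_mul _
      (measurable_exponentialPDFReal 1).ennreal_ofReal hmeas
  rw [key]
  have hsplit : ∫⁻ x, exponentialPDF 1 x * expMeasure 1 (Ioi (x / c))
      = ∫⁻ x in Ioi (0:ℝ), ENNReal.ofReal (rexp (-(1 + 1/c) * x)) := by
    rw [← lintegral_add_compl (fun x => exponentialPDF 1 x * expMeasure 1 (Ioi (x / c)))
      (measurableSet_Ioi (a := (0:ℝ)))]
    have hneg : ∫⁻ x in (Ioi (0:ℝ))ᶜ, exponentialPDF 1 x * expMeasure 1 (Ioi (x / c)) = 0 := by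
      rw [compl_Ioi]
      have h0 : ∀ᵐ (y : ℝ) ∂(volume : Measure ℝ), y ≠ 0 := ae_iff.mpr (by simp)
      have : ∀ᵐ x ∂(volume.restrict (Iic (0:ℝ))),
          exponentialPDF 1 x * expMeasure 1 (Ioi (x / c)) = 0 := by
        filter_upwards [ae_restrict_mem measurableSet_Iic, ae_restrict_of_ae h0] with x hx hne
        rw [exponentialPDF_of_neg (lt_of_le_of_ne (mem_Iic.mp hx) hne), zero_mul]
      rw [lintegral_congr_ae this, lintegral_zero]
    rw [hneg, add_zero]
    refine setLIntegral_congr_fun_ae measurableSet_Ioi (ae_of_all _ fun x hx => ?_)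
    have hx' : (0:ℝ) < x := hx
    rw [exponentialPDF_of_nonneg hx'.le, exp_tail _ (le_of_lt (div_pos hx' hc)),
      ← ENNReal.ofReal_mul (by positivity), one_mul, one_mul, ← Real.exp_add]
    congr 2
    field_simp
    ring
  rw [hsplit]
  have hb : 0 < 1 + 1/c := by positivity
  have hint : IntegrableOn (fun x => rexp (-(1 + 1/c) * x)) (Ioi (0:ℝ)) :=
    exp_neg_integrableOn_Ioi 0 hb
  rw [← ofReal_integral_eq_lintegral_ofReal hint (ae_of_all _ fun x => (exp_pos _).le)]
  congr 1
  have he : ∀ x : ℝ, rexp (-(1 + 1/c) * x) = (fun y => rexp (-y)) ((1 + 1/c) * x) := by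
    intro x; ring_nf
  simp_rw [he]
  rw [integral_comp_mul_left_Ioi (fun y => rexp (-y)) 0 hb, mul_zero, integral_exp_neg_Ioi,
    neg_zero, Real.exp_zero, smul_eq_mul, mul_one]
  rw [inv_eq_one_div, div_eq_div_iff (by positivity) (by positivity)]; field_simp; ring

lemma mellin_lint {s : ℝ} (hs : 0 < s) (hs1 : s < 1) :
    ∫⁻ v in Ioi (0:ℝ), ENNReal.ofReal (v ^ (s-1) * (1+v)⁻¹)
      = ENNReal.ofReal (Real.Gamma s * Real.Gamma (1-s)) := by
  have hmeasF : Measurable (Function.uncurry fun v t : ℝ =>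
      ENNReal.ofReal (v ^ (s-1) * rexp (-(1+v) * t))) := by
    apply Measurable.ennreal_ofReal
    fun_prop
  -- step (a)
  have ha : ∀ v ∈ Ioi (0:ℝ), ENNReal.ofReal (v ^ (s-1) * (1+v)⁻¹)
      = ∫⁻ t in Ioi (0:ℝ), ENNReal.ofReal (v ^ (s-1) * rexp (-(1+v) * t)) := by
    intro v hv
    have hv' : (0:ℝ) < v := hv
    have hb : 0 < 1 + v := by linarith
    have hint : IntegrableOn (fun t => rexp (-(1+v) * t)) (Ioi (0:ℝ)) :=
      exp_neg_integrableOn_Ioi 0 hb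
    have h1 : ENNReal.ofReal ((1+v)⁻¹)
        = ∫⁻ t in Ioi (0:ℝ), ENNReal.ofReal (rexp (-(1+v) * t)) := by
      rw [← ofReal_integral_eq_lintegral_ofReal hint (ae_of_all _ fun t => (exp_pos _).le)]
      congr 1
      have he : ∀ t : ℝ, rexp (-(1+v) * t) = (fun y => rexp (-y)) ((1+v) * t) := by
        intro t; ring_nf
      simp_rw [he]
      rw [integral_comp_mul_left_Ioi (fun y => rexp (-y)) 0 hb, mul_zero, integral_exp_neg_Ioi,
        neg_zero, Real.exp_zero, smul_eq_mul, mul_one]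
    rw [ENNReal.ofReal_mul (by positivity), h1, ← lintegral_const_mul _ (by fun_prop)]
    congr 1; ext t
    rw [← ENNReal.ofReal_mul (by positivity)]
  rw [setLIntegral_congr_fun_ae measurableSet_Ioi (ae_of_all _ ha)]
  -- step (b): swap
  rw [lintegral_lintegral_swap (hmeasF.aemeasurable)]
  -- step (c): inner integral
  have hc : ∀ t ∈ Ioi (0:ℝ),
      ∫⁻ v in Ioi (0:ℝ), ENNReal.ofReal (v ^ (s-1) * rexp (-(1+v) * t))
        = ENNReal.ofReal (Real.Gamma s * (rexp (-t) * t ^ ((1-s) - 1))) := by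
    intro t ht
    have ht' : (0:ℝ) < t := ht
    have h2 : ∀ v ∈ Ioi (0:ℝ), ENNReal.ofReal (v ^ (s-1) * rexp (-(1+v) * t))
        = ENNReal.ofReal (rexp (-t)) * ENNReal.ofReal (v ^ (s-1) * rexp (-t * v)) := by
      intro v hv
      have hv' : (0:ℝ) < v := hv
      rw [← ENNReal.ofReal_mul (by positivity)]
      congr 1
      rw [show (-(1+v) * t) = -t + -t * v by ring, Real.exp_add]
      ring
    rw [setLIntegral_congr_fun_ae measurableSet_Ioi (ae_of_all _ h2),
      lintegral_const_mul _ (by fun_prop)]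
    have hint : IntegrableOn (fun v : ℝ => v ^ (s-1) * rexp (-t * v)) (Ioi 0) := by
      have := integrableOn_rpow_mul_exp_neg_mul_rpow (p := 1) (s := s-1) (b := t)
        (by linarith) one_pos ht'
      simpa [Real.rpow_one] using this
    rw [← ofReal_integral_eq_lintegral_ofReal hint ?_]
    · have hval : ∫ v in Ioi (0:ℝ), v ^ (s-1) * rexp (-t * v)
          = t ^ (-s) * Real.Gamma s := by
        have := integral_rpow_mul_exp_neg_mul_rpow (p := 1) (q := s-1) (b := t)
          one_pos (by linarith) ht'
        simp only [Real.rpow_one] at this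
        rw [this]
        norm_num
      rw [hval, ← ENNReal.ofReal_mul (by positivity)]
      congr 1
      rw [show (1-s) - 1 = -s by ring]
      ring
    · filter_upwards [ae_restrict_mem measurableSet_Ioi] with v hv
      have hv' : (0:ℝ) < v := hv
      positivity
  rw [setLIntegral_congr_fun_ae measurableSet_Ioi (ae_of_all _ hc)]
  -- step (d): outer integral
  have hΓ : 0 ≤ Real.Gamma s := (Real.Gamma_pos_of_pos hs).le
  have h3 : ∀ t ∈ Ioi (0:ℝ), ENNReal.ofReal (Real.Gamma s * (rexp (-t) * t ^ ((1-s)-1)))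
      = ENNReal.ofReal (Real.Gamma s) * ENNReal.ofReal (rexp (-t) * t ^ ((1-s)-1)) := by
    intro t ht
    rw [← ENNReal.ofReal_mul hΓ]
  rw [setLIntegral_congr_fun_ae measurableSet_Ioi (ae_of_all _ h3),
    lintegral_const_mul _ (by fun_prop)]
  have hint : IntegrableOn (fun t : ℝ => rexp (-t) * t ^ ((1-s)-1)) (Ioi 0) :=
    Real.GammaIntegral_convergent (by linarith)
  rw [← ofReal_integral_eq_lintegral_ofReal hint ?_]
  · rw [← Real.Gamma_eq_integral (by linarith : (0:ℝ) < 1 - s), ← ENNReal.ofReal_mul hΓ]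
  · filter_upwards [ae_restrict_mem measurableSet_Ioi] with t ht
    have ht' : (0:ℝ) < t := ht
    positivity

lemma mellin_int {s : ℝ} (hs : 0 < s) (hs1 : s < 1) :
    ∫ v in Ioi (0:ℝ), v ^ (s-1) * (1+v)⁻¹ = Real.Gamma s * Real.Gamma (1-s) := by
  have hnn : 0 ≤ᶠ[ae (volume.restrict (Ioi (0:ℝ)))] fun v => v ^ (s-1) * (1+v)⁻¹ := by
    filter_upwards [ae_restrict_mem measurableSet_Ioi] with v hv
    have hv' : (0:ℝ) < v := hv
    positivity
  have hm : AEStronglyMeasurable (fun v : ℝ => v ^ (s-1) * (1+v)⁻¹)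
      (volume.restrict (Ioi (0:ℝ))) := by
    apply Measurable.aestronglyMeasurable; fun_prop
  rw [integral_eq_lintegral_of_nonneg_ae hnn hm, mellin_lint hs hs1, ENNReal.toReal_ofReal]
  exact mul_nonneg (Real.Gamma_pos_of_pos hs).le
    (Real.Gamma_pos_of_pos (by linarith : (0:ℝ) < 1-s)).le

lemma key_I {α : ℝ} (hα : 2 < α) :
    ∫ u in Ioi (0:ℝ), u * (1 + u ^ α)⁻¹
      = (1/2) * (Real.Gamma (1 + 2/α) * Real.Gamma (1 - 2/α)) := by
  have hα0 : (0:ℝ) < α := by linarith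
  have hs : 0 < 2/α := by positivity
  have hs1 : 2/α < 1 := by rw [div_lt_one hα0]; linarith
  have step : ∫ u in Ioi (0:ℝ), u * (1 + u ^ α)⁻¹
      = ∫ v in Ioi (0:ℝ), α⁻¹ * (v ^ (2/α - 1) * (1+v)⁻¹) := by
    rw [← integral_comp_rpow_Ioi (fun v => α⁻¹ * (v ^ (2/α - 1) * (1+v)⁻¹)) (ne_of_gt hα0)]
    refine setIntegral_congr_fun measurableSet_Ioi (fun x hx => ?_)
    have hx' : (0:ℝ) < x := hx
    have h1 : (x ^ α) ^ (2/α - 1) = x ^ (2 - α) := by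
      rw [← Real.rpow_mul hx'.le]; congr 1; field_simp
    have h2 : x ^ (α-1) * x ^ (2-α) = x := by
      rw [← Real.rpow_add hx']; norm_num
    rw [smul_eq_mul, abs_of_pos hα0, h1,
      show α * x ^ (α-1) * (α⁻¹ * (x ^ (2-α) * (1+x^α)⁻¹))
        = (α * α⁻¹) * ((x ^ (α-1) * x ^ (2-α)) * (1+x^α)⁻¹) by ring,
      mul_inv_cancel₀ (ne_of_gt hα0), h2, one_mul]
  rw [step, integral_const_mul, mellin_int hs hs1, add_comm (1:ℝ) (2/α),
    Real.Gamma_add_one (ne_of_gt hs)]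
  field_simp

lemma subst_J {α b : ℝ} (hα0 : 0 < α) (hb : 0 < b) :
    ∫ y in Ioi (0:ℝ), y * (b / (y ^ α + b))
      = b ^ (2/α) * ∫ u in Ioi (0:ℝ), u * (1 + u ^ α)⁻¹ := by
  set c0 := b ^ (1/α) with hc0_def
  have hc0 : 0 < c0 := Real.rpow_pos_of_pos hb _
  have hc0α : c0 ^ α = b := by
    rw [hc0_def, ← Real.rpow_mul hb.le, one_div, inv_mul_cancel₀ (ne_of_gt hα0), Real.rpow_one]
  have h2 := integral_comp_mul_left_Ioi (fun y => y * (b / (y ^ α + b))) 0 hc0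
  rw [mul_zero] at h2
  have h3 : ∫ x in Ioi (0:ℝ), (fun y => y * (b / (y ^ α + b))) (c0 * x)
      = c0 * ∫ u in Ioi (0:ℝ), u * (1 + u ^ α)⁻¹ := by
    rw [← integral_const_mul]
    refine setIntegral_congr_fun measurableSet_Ioi (fun x hx => ?_)
    have hx' : (0:ℝ) < x := hx
    have hxα : 0 < x ^ α := Real.rpow_pos_of_pos hx' α
    simp only
    rw [Real.mul_rpow hc0.le hx'.le, hc0α]
    have hne1 : b * x ^ α + b ≠ 0 := by positivity
    have hne2 : (1:ℝ) + x ^ α ≠ 0 := by positivity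
    field_simp
    ring
  have hsq : c0 * c0 = b ^ (2/α) := by
    rw [hc0_def, ← Real.rpow_add hb]
    congr 1; ring
  rw [h3, smul_eq_mul] at h2
  have h4 : ∫ x in Ioi (0:ℝ), (fun y => y * (b / (y ^ α + b))) x
      = ∫ y in Ioi (0:ℝ), y * (b / (y ^ α + b)) := rfl
  rw [h4] at h2
  have : ∫ y in Ioi (0:ℝ), y * (b / (y ^ α + b))
      = c0 * (c0 * ∫ u in Ioi (0:ℝ), u * (1 + u ^ α)⁻¹) := by
    rw [h2, ← mul_assoc, mul_inv_cancel₀ (ne_of_gt hc0), one_mul]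
  rw [this, ← mul_assoc, hsq]

theorem stmt_4 {Ω : Type*} [MeasurableSpace Ω] (μ : Measure Ω) [IsProbabilityMeasure μ]
    (H H' : Ω → ℝ) (hH : Measurable H) (hH' : Measurable H')
    (hlawH : Measure.map H μ = expMeasure 1) (hlawH' : Measure.map H' μ = expMeasure 1)
    (hindep : IndepFun H H' μ)
    (α β d : ℝ) (hα : 2 < α) (hβ : 0 < β) (hd : 0 < d) :
    ∫ X : EuclideanSpace ℝ (Fin 2),
        (μ {ω | H ω * d ^ (-α) < β * H' ω * ‖X‖ ^ (-α)}).toReal =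
      β ^ (2 / α) * (π * Real.Gamma (1 + 2 / α) * Real.Gamma (1 - 2 / α)) * d ^ 2 := by
  have hα0 : (0:ℝ) < α := by linarith
  have hdα : 0 < d ^ α := Real.rpow_pos_of_pos hd α
  set b := β * d ^ α with hb_def
  have hb : 0 < b := by positivity
  set g : ℝ → ℝ := fun r => b / (r ^ α + b) with hg_def
  -- pointwise identification of the integrand
  have hpt : ∀ X : EuclideanSpace ℝ (Fin 2), X ≠ 0 →
      (μ {ω | H ω * d ^ (-α) < β * H' ω * ‖X‖ ^ (-α)}).toReal = g ‖X‖ := by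
    intro X hX
    have hr : 0 < ‖X‖ := norm_pos_iff.mpr hX
    have hrα : 0 < ‖X‖ ^ α := Real.rpow_pos_of_pos hr α
    set c := b * (‖X‖ ^ α)⁻¹ with hc_def
    have hc : 0 < c := by positivity
    have hset : {ω | H ω * d ^ (-α) < β * H' ω * ‖X‖ ^ (-α)} = {ω | H ω < c * H' ω} := by
      ext ω
      simp only [mem_setOf_eq]
      rw [Real.rpow_neg hd.le, Real.rpow_neg hr.le, ← div_eq_mul_inv, div_lt_iff₀ hdα]
      have hEq : β * H' ω * (‖X‖ ^ α)⁻¹ * d ^ α = c * H' ω := by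
        rw [hc_def, hb_def]; ring
      rw [hEq]
    rw [hset, prob_lt μ H H' hH hH' hlawH hlawH' hindep hc,
      ENNReal.toReal_ofReal (by positivity)]
    rw [hg_def]
    simp only
    rw [hc_def]
    rw [div_eq_div_iff (by positivity) (by positivity)]
    field_simp
  -- almost-everywhere congruence
  have hae : (fun X : EuclideanSpace ℝ (Fin 2) =>
      (μ {ω | H ω * d ^ (-α) < β * H' ω * ‖X‖ ^ (-α)}).toReal)
      =ᵐ[volume] fun X => g ‖X‖ := by
    have h0 : (volume : Measure (EuclideanSpace ℝ (Fin 2))) {0} = 0 := measure_singleton 0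
    rw [Filter.eventuallyEq_iff_exists_mem]
    refine ⟨{0}ᶜ, ?_, fun X hX => hpt X hX⟩
    rw [mem_ae_iff, compl_compl]
    exact h0
  rw [integral_congr_ae hae]
  -- polar coordinates
  have hpolar := MeasureTheory.integral_fun_norm_addHaar
    (volume : Measure (EuclideanSpace ℝ (Fin 2))) g
  simp only [finrank_euclideanSpace_fin, smul_eq_mul, nsmul_eq_mul, Nat.cast_ofNat,
    show (2-1 : ℕ) = 1 from rfl, pow_one] at hpolar
  rw [hpolar]
  have hball : (volume (Metric.ball (0 : EuclideanSpace ℝ (Fin 2)) 1)).toReal = π := by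
    rw [EuclideanSpace.volume_ball]
    simp only [Fintype.card_fin]
    norm_num
    exact Real.sq_sqrt pi_nonneg
  rw [measureReal_def, hball]
  have hJ : ∫ y in Ioi (0:ℝ), y * g y
      = b ^ (2/α) * ((1/2) * (Real.Gamma (1 + 2/α) * Real.Gamma (1 - 2/α))) := by
    rw [hg_def]
    simp only
    rw [subst_J hα0 hb, key_I hα]
  rw [hJ]
  have hbr : b ^ (2/α) = β ^ (2/α) * d ^ (2:ℕ) := by
    rw [hb_def, Real.mul_rpow hβ.le hdα.le, ← Real.rpow_natCast d 2, ← Real.rpow_mul hd.le]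
    congr 2
    field_simp
    norm_num
  rw [hbr]
  ring
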